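/- Let γ ∈ ℝ, T > 0, and let v₀, v₁, v₂, v₃ : [0,T] → ℂ be continuous (the boundary values u, uₓ, u_{xx}, u_{xxx} at x = 0). Define R(t,ζ) = [[R₁₁, R₁₂],[R₂₁, −R₁₁]] with R₁₁(t,ζ) = −4iγζ²|v₀|² − 2γζ(v₀·conj(v₁) − v₁·conj(v₀)) + iγ(3|v₀|⁴ − |v₁|² + conj(v₀)v₂ + v₀·conj(v₂)) + i|v₀|², R₁₂(t,ζ) = −8γζ³v₀ − 4iγζ²v₁ + 2γζv₂ + 2ζ(2γ|v₀|²+1)v₀ + iγv₃ + i(6γ|v₀|²+1)v₁, R₂₁(t,ζ) = −8γζ³·conj(v₀) − 4iγζ²·conj(v₁) + 2γζ·conj(v₂) + 2ζ(2γ|v₀|²+1)·conj(v₀) + iγ·conj(v₃) + i(6γ|v₀|²+1)·conj(v₁), where all vⱼ are evaluated at t. Set θ = 8γζ⁴ − 2ζ² and Λ = diag(1,−1). Then for every ζ ∈ ℂ the Volterra equation G(t) = I − ∫ₜ^T exp(iθ(t−τ)Λ)·R(τ,ζ)G(τ)·exp(−iθ(t−τ)Λ) dτ has a unique continuous solution G(·,ζ)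 : [0,T] → M₂(ℂ); det G(t,ζ) = 1 for all t ∈ [0,T]; and for each fixed t ∈ [0,T], every entry of G(t,ζ) is an entire function of ζ. In particular the spectral functions Y(ζ) = G₂₂(0,ζ) and Z(ζ) = G₁₂(0,ζ) are entire. -/

import Mathlib

open MeasureTheory Matrix intervalIntegral
open Set Metric Filter Topology
open scoped Interval

/-- The matrix `R(t,ζ)` of the t-part of the FODNLS Lax pair at `x = 0`, built from the
boundary values `v₀ = u(0,·)`, `v₁ = uₓ(0,·)`, `v₂ = u_xx(0,·)`, `v₃ = u_xxx(0,·)`. -/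
noncomputable def Rm (γ : ℝ) (v₀ v₁ v₂ v₃ : ℝ → ℂ) (t : ℝ) (ζ : ℂ) :
    Matrix (Fin 2) (Fin 2) ℂ :=
  let g : ℂ := (γ : ℂ)
  let n0 : ℂ := (Complex.normSq (v₀ t) : ℂ)
  let R11 : ℂ :=
    -4 * Complex.I * g * ζ ^ 2 * n0 -
      2 * g * ζ * (v₀ t * (starRingEnd ℂ) (v₁ t) - v₁ t * (starRingEnd ℂ) (v₀ t)) +
      Complex.I * g * (3 * n0 ^ 2 - (Complex.normSq (v₁ t) : ℂ) +
        (starRingEnd ℂ) (v₀ t) * v₂ t + v₀ t * (starRingEnd ℂ) (v₂ t)) +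
      Complex.I * n0
  let R12 : ℂ :=
    -8 * g * ζ ^ 3 * v₀ t - 4 * Complex.I * g * ζ ^ 2 * v₁ t + 2 * g * ζ * v₂ t +
      2 * ζ * (2 * g * n0 + 1) * v₀ t + Complex.I * g * v₃ t +
      Complex.I * (6 * g * n0 + 1) * v₁ t
  let R21 : ℂ :=
    -8 * g * ζ ^ 3 * (starRingEnd ℂ) (v₀ t) -
      4 * Complex.I * g * ζ ^ 2 * (starRingEnd ℂ) (v₁ t) +
      2 * g * ζ * (starRingEnd ℂ) (v₂ t) + 2 * ζ * (2 * g * n0 + 1) * (starRingEnd ℂ) (v₀ t) +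
      Complex.I * g * (starRingEnd ℂ) (v₃ t) +
      Complex.I * (6 * g * n0 + 1) * (starRingEnd ℂ) (v₁ t)
  !![R11, R12; R21, -R11]

/-- The integrand `exp(iθ(t−τ)Λ) · R(τ,ζ)G(τ) · exp(−iθ(t−τ)Λ)` with `θ = 8γζ⁴ − 2ζ²`
and `Λ = diag(1,−1)`, so that `exp(cΛ) = diag(e^c, e^{−c})`. -/
noncomputable def Km (γ : ℝ) (v₀ v₁ v₂ v₃ : ℝ → ℂ) (ζ : ℂ)
    (G : ℝ → Matrix (Fin 2) (Fin 2) ℂ) (t τ : ℝ) : Matrix (Fin 2) (Fin 2) ℂ :=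
  let θ : ℂ := 8 * (γ : ℂ) * ζ ^ 4 - 2 * ζ ^ 2
  !![Complex.exp (Complex.I * θ * ((t - τ : ℝ) : ℂ)), 0;
     0, Complex.exp (-(Complex.I * θ * ((t - τ : ℝ) : ℂ)))] *
    (Rm γ v₀ v₁ v₂ v₃ τ ζ * G τ) *
    !![Complex.exp (-(Complex.I * θ * ((t - τ : ℝ) : ℂ))), 0;
       0, Complex.exp (Complex.I * θ * ((t - τ : ℝ) : ℂ))]

/-- `G` is a continuous solution on `[0,T]` of the Volterra equation
`G(t) = I − ∫ₜ^T exp(iθ(t−τ)Λ)·R(τ,ζ)G(τ)·exp(−iθ(t−τ)Λ) dτ` (entrywise). -/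
def IsVolterraSolT (γ : ℝ) (T : ℝ) (v₀ v₁ v₂ v₃ : ℝ → ℂ) (ζ : ℂ)
    (G : ℝ → Matrix (Fin 2) (Fin 2) ℂ) : Prop :=
  (∀ i j : Fin 2, ContinuousOn (fun t => G t i j) (Set.Icc 0 T)) ∧
  ∀ t ∈ Set.Icc (0 : ℝ) T, ∀ i j : Fin 2,
    IntervalIntegrable (fun τ => Km γ v₀ v₁ v₂ v₃ ζ G t τ i j) volume t T ∧
    G t i j = (1 : Matrix (Fin 2) (Fin 2) ℂ) i j - ∫ τ in t..T, Km γ v₀ v₁ v₂ v₃ ζ G t τ i j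

noncomputable def Pic (A : ℂ → ℝ → Fin 2 → Fin 2 → ℂ) (T : ℝ) :
    ℕ → ℂ → ℝ → Fin 2 → Fin 2 → ℂ
  | 0, _, _, i, j => if i = j then 1 else 0
  | (n+1), ζ, t, i, j =>
      -∫ τ in t..T, (A ζ τ i 0 * Pic A T n ζ τ 0 j + A ζ τ i 1 * Pic A T n ζ τ 1 j)

noncomputable def HSf (A : ℂ → ℝ → Fin 2 → Fin 2 → ℂ) (T : ℝ) (ζ : ℂ) (t : ℝ)
    (i j : Fin 2) : ℂ := ∑' n, Pic A T n ζ t i j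

section Abstract
variable {A : ℂ → ℝ → Fin 2 → Fin 2 → ℂ} {T : ℝ}

theorem Pic_cont (hA : ∀ i j, Continuous fun p : ℂ × ℝ => A p.1 p.2 i j) (n : ℕ)
    (i j : Fin 2) : Continuous fun p : ℂ × ℝ => Pic A T n p.1 p.2 i j := by
  induction n generalizing i j with
  | zero => simp only [Pic]; exact continuous_const
  | succ n ih =>
    have hf : Continuous (Function.uncurry fun (p : ℂ × ℝ) τ =>
        A p.1 τ i 0 * Pic A T n p.1 τ 0 j + A p.1 τ i 1 * Pic A T n p.1 τ 1 j) := by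
      have h1 : Continuous fun q : (ℂ × ℝ) × ℝ => (q.1.1, q.2) :=
        (continuous_fst.comp continuous_fst).prodMk continuous_snd
      exact (((hA i 0).comp h1).mul ((ih 0 j).comp h1)).add
        (((hA i 1).comp h1).mul ((ih 1 j).comp h1))
    have hmain := continuous_parametric_intervalIntegral_of_continuous (μ := volume)
      (a₀ := T) hf continuous_snd
    have heq : (fun p : ℂ × ℝ => Pic A T (n+1) p.1 p.2 i j) = fun p : ℂ × ℝ =>
        ∫ τ in T..p.2, (A p.1 τ i 0 * Pic A T n p.1 τ 0 j + A p.1 τ i 1 * Pic A T n p.1 τ 1 j) := by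
      funext p
      simp only [Pic]
      rw [intervalIntegral.integral_symm, neg_neg]
    rw [heq]
    exact hmain

theorem paramHolo {F : ℂ → ℝ → ℂ} (hF : Continuous fun p : ℂ × ℝ => F p.1 p.2)
    {a b : ℝ} (hab : a ≤ b) (hdF : ∀ τ ∈ Icc a b, Differentiable ℂ fun ζ => F ζ τ) :
    Differentiable ℂ fun ζ => ∫ τ in a..b, F ζ τ := by
  intro ζ₀
  set μ := volume.restrict (Ioc a b) with hμ
  obtain ⟨C, hC⟩ : ∃ C, ∀ p ∈ (closedBall ζ₀ 2 ×ˢ Icc a b),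
      ‖(fun p : ℂ × ℝ => F p.1 p.2) p‖ ≤ C :=
    ((isCompact_closedBall ζ₀ 2).prod isCompact_Icc).exists_bound_of_continuousOn
      hF.continuousOn
  have hconτ : ∀ ζ, Continuous fun τ => F ζ τ := fun ζ =>
    hF.comp (Continuous.prodMk_right ζ)
  have hmem : ∀ᵐ τ ∂μ, τ ∈ Ioc a b := ae_restrict_mem measurableSet_Ioc
  -- measurability of the derivative via difference quotients
  have hF'meas : AEStronglyMeasurable (fun τ => deriv (fun z => F z τ) ζ₀) μ := by
    apply aestronglyMeasurable_of_tendsto_ae (u := atTop)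
      (f := fun (m : ℕ) (τ : ℝ) => (((m : ℝ) + 1 : ℝ) : ℂ) * (F (ζ₀ + (((m:ℝ)+1)⁻¹ : ℝ)) τ - F ζ₀ τ))
    · intro m
      exact (continuous_const.mul ((hconτ _).sub (hconτ _))).aestronglyMeasurable
    · filter_upwards [hmem] with τ hτ
      have hd : HasDerivAt (fun z => F z τ) (deriv (fun z => F z τ) ζ₀) ζ₀ :=
        ((hdF τ (Ioc_subset_Icc_self hτ)) ζ₀).hasDerivAt
      have hslope := hasDerivAt_iff_tendsto_slope.1 hd
      have hseq : Tendsto (fun m : ℕ => ζ₀ + ((((m:ℝ)+1)⁻¹ : ℝ) : ℂ)) atTop (𝓝[≠] ζ₀) := by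
        rw [tendsto_nhdsWithin_iff]
        constructor
        · have : Tendsto (fun m : ℕ => ((((m:ℝ)+1)⁻¹ : ℝ) : ℂ)) atTop (𝓝 0) := by
            rw [show (0:ℂ) = ((0:ℝ):ℂ) by norm_num]
            apply Tendsto.comp (Complex.continuous_ofReal.tendsto 0)
            simpa using tendsto_one_div_add_atTop_nhds_zero_nat (𝕜 := ℝ)
          simpa using tendsto_const_nhds.add this
        · refine Eventually.of_forall fun m => ?_
          simp only [mem_compl_iff, mem_singleton_iff]
          intro h
          have : ((((m:ℝ)+1)⁻¹ : ℝ) : ℂ) = 0 := by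
            have := congrArg (· - ζ₀) h; simpa using this
          rw [Complex.ofReal_eq_zero] at this
          have : ((m:ℝ)+1)     ≠ 0 := by positivity
          simp_all
      have := hslope.comp hseq
      refine Tendsto.congr (fun m => ?_) this
      simp only [Function.comp_apply, slope_def_field]
      rw [add_sub_cancel_left]
      rw [div_eq_inv_mul]
      congr 1
      rw [← Complex.ofReal_inv, inv_inv]
  have hball : ∀ ζ ∈ ball ζ₀ 1, ∀ τ ∈ Ioc a b, ‖deriv (fun z => F z τ) ζ‖ ≤ C := by
    intro ζ hζ τ hτ
    have hd : DiffContOnCl ℂ (fun z => F z τ) (ball ζ 1) :=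
      (hdF τ (Ioc_subset_Icc_self hτ)).diffContOnCl
    have := Complex.norm_deriv_le_of_forall_mem_sphere_norm_le one_pos hd (C := C) ?_
    · simpa using this
    · intro z hz
      apply hC (z, τ)
      constructor
      · simp only [mem_closedBall]
        calc dist z ζ₀ ≤ dist z ζ + dist ζ ζ₀ := dist_triangle _ _ _
        _ ≤ 1 + 1 := by
            rw [mem_sphere] at hz
            rw [mem_ball] at hζ
            exact add_le_add hz.le hζ.le
        _ = 2 := by norm_num
      · exact Ioc_subset_Icc_self hτ
  have key := (hasDerivAt_integral_of_dominated_loc_of_deriv_le (μ := μ) (𝕜 := ℂ)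
      (F := F) (F' := fun ζ τ => deriv (fun z => F z τ) ζ) (x₀ := ζ₀)
      (bound := fun _ => C) (ball_mem_nhds ζ₀ one_pos)
      (Eventually.of_forall fun ζ => (hconτ ζ).aestronglyMeasurable)
      ((hconτ ζ₀).integrableOn_Ioc) hF'meas
      (by filter_upwards [hmem] with τ hτ ζ hζ; exact hball ζ hζ τ hτ)
      (integrableOn_const measure_Ioc_lt_top.ne)
      (by filter_upwards [hmem] with τ hτ ζ _;
          exact ((hdF τ (Ioc_subset_Icc_self hτ)) ζ).hasDerivAt)).2
  have heq : (fun ζ => ∫ τ in a..b, F ζ τ) = fun ζ => ∫ τ, F ζ τ ∂μ := by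
    funext ζ; rw [intervalIntegral.integral_of_le hab]
  rw [heq]
  exact key.differentiableAt

theorem Pic_diff (hA : ∀ i j, Continuous fun p : ℂ × ℝ => A p.1 p.2 i j)
    (hAd : ∀ τ i j, Differentiable ℂ fun ζ => A ζ τ i j) (n : ℕ) :
    ∀ (t : ℝ), t ≤ T → ∀ i j, Differentiable ℂ fun ζ => Pic A T n ζ t i j := by
  induction n with
  | zero => intro t _ i j; simp only [Pic]; exact differentiable_const _
  | succ n ih =>
    intro t ht i j
    have heq : (fun ζ => Pic A T (n+1) ζ t i j) = fun ζ =>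
        -∫ τ in t..T, (A ζ τ i 0 * Pic A T n ζ τ 0 j + A ζ τ i 1 * Pic A T n ζ τ 1 j) := rfl
    rw [heq]
    apply Differentiable.neg
    apply paramHolo ?_ ht ?_
    · exact ((hA i 0).mul (Pic_cont hA n 0 j)).add ((hA i 1).mul (Pic_cont hA n 1 j))
    · intro τ hτ
      exact ((hAd τ i 0).mul (ih τ hτ.2 0 j)).add ((hAd τ i 1).mul (ih τ hτ.2 1 j))

theorem exists_M (hA : ∀ i j, Continuous fun p : ℂ × ℝ => A p.1 p.2 i j) (hT : 0 ≤ T)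
    (R : ℝ) : ∃ M : ℝ, 0 ≤ M ∧ ∀ ζ ∈ closedBall (0:ℂ) R, ∀ τ ∈ Icc (0:ℝ) T,
      ∀ i j, ‖A ζ τ i j‖ ≤ M := by
  obtain ⟨C, hC⟩ := ((isCompact_closedBall (0:ℂ) R).prod
      (isCompact_Icc (a := (0:ℝ)) (b := T))).exists_bound_of_continuousOn
    (f := fun p : ℂ × ℝ => (A p.1 p.2 0 0, A p.1 p.2 0 1, A p.1 p.2 1 0, A p.1 p.2 1 1))
    (((hA 0 0).prodMk (((hA 0 1).prodMk ((hA 1 0).prodMk (hA 1 1))))).continuousOn)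
  refine ⟨max C 0, le_max_right _ _, fun ζ hζ τ hτ i j => ?_⟩
  have h := hC (ζ, τ) ⟨hζ, hτ⟩
  have h1 : ‖A ζ τ i j‖ ≤ ‖(A ζ τ 0 0, A ζ τ 0 1, A ζ τ 1 0, A ζ τ 1 1)‖ := by
    set p := (A ζ τ 0 0, A ζ τ 0 1, A ζ τ 1 0, A ζ τ 1 1) with hp
    have e00 : ‖A ζ τ 0 0‖ ≤ ‖p‖ := norm_fst_le p
    have e01 : ‖A ζ τ 0 1‖ ≤ ‖p‖ := le_trans (norm_fst_le p.2) (norm_snd_le p)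
    have e10 : ‖A ζ τ 1 0‖ ≤ ‖p‖ :=
      le_trans (le_trans (norm_fst_le p.2.2) (norm_snd_le p.2)) (norm_snd_le p)
    have e11 : ‖A ζ τ 1 1‖ ≤ ‖p‖ :=
      le_trans (le_trans (norm_snd_le p.2.2) (norm_snd_le p.2)) (norm_snd_le p)
    fin_cases i <;> fin_cases j <;> first | exact e00 | exact e01 | exact e10 | exact e11
  exact le_trans h1 (le_trans h (le_max_left _ _))

/-- one Volterra integral step estimate -/
theorem volterra_step {f : ℝ → ℂ} {t : ℝ} (ht : t ∈ Icc (0:ℝ) T) {K : ℝ} (hK : 0 ≤ K)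
    (n : ℕ) (hb : ∀ τ ∈ Ι t T, ‖f τ‖ ≤ K * (T - τ)^n) :
    ‖∫ τ in t..T, f τ‖ ≤ K * ((T-t)^(n+1)/(n+1)) := by
  have hg : IntervalIntegrable (fun τ => K * (T - τ)^n) volume t T :=
    (continuous_const.mul ((continuous_const.sub continuous_id).pow n)).intervalIntegrable _ _
  have h1 : ‖∫ τ in t..T, f τ‖ ≤ |∫ τ in t..T, K * (T-τ)^n| := by
    apply intervalIntegral.norm_integral_le_abs_of_norm_le ?_ hg
    filter_upwards [ae_restrict_mem measurableSet_uIoc] with τ hτ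
    exact hb τ hτ
  have h2 : ∫ τ in t..T, K * (T-τ)^n = K * ((T-t)^(n+1)/(n+1)) := by
    rw [intervalIntegral.integral_const_mul]
    congr 1
    rw [intervalIntegral.integral_comp_sub_left (fun s => s^n) T]
    simp [integral_pow]
  rw [h2] at h1
  refine le_trans h1 (le_of_eq (abs_of_nonneg ?_))
  have h3 : (0:ℝ) ≤ T - t := sub_nonneg.2 ht.2
  positivity

theorem Pic_bound (hT : 0 ≤ T) {R M : ℝ} (hM0 : 0 ≤ M)
    (hM : ∀ ζ ∈ closedBall (0:ℂ) R, ∀ τ ∈ Icc (0:ℝ) T, ∀ i j, ‖A ζ τ i j‖ ≤ M) (n : ℕ) :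
    ∀ ζ ∈ closedBall (0:ℂ) R, ∀ t ∈ Icc (0:ℝ) T, ∀ i j,
      ‖Pic A T n ζ t i j‖ ≤ (2*M)^n * (T-t)^n / n.factorial := by
  induction n with
  | zero =>
    intro ζ hζ t ht i j
    simp only [Pic]
    split <;> simp
  | succ n ih =>
    intro ζ hζ t ht i j
    have hsub : Ι t T ⊆ Icc 0 T := by
      rw [uIoc_of_le ht.2]
      exact fun x hx => ⟨le_trans ht.1 hx.1.le, hx.2⟩
    have hstep := volterra_step (T := T) ht
      (K := 2*M*((2*M)^n / n.factorial)) (by positivity) n (f := fun τ =>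
        A ζ τ i 0 * Pic A T n ζ τ 0 j + A ζ τ i 1 * Pic A T n ζ τ 1 j) ?_
    · have : ‖Pic A T (n+1) ζ t i j‖ = ‖∫ τ in t..T,
          (A ζ τ i 0 * Pic A T n ζ τ 0 j + A ζ τ i 1 * Pic A T n ζ τ 1 j)‖ := by
        simp only [Pic, norm_neg]
      rw [this]
      refine le_trans hstep (le_of_eq ?_)
      have hfac : ((n+1).factorial : ℝ) = (n+1) * n.factorial := by
        rw [Nat.factorial_succ]; push_cast; ring
      have h1 : (n.factorial : ℝ) ≠ 0 := Nat.cast_ne_zero.2 n.factorial_ne_zero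
      have h2 : ((n:ℝ)+1) ≠ 0 := by positivity
      rw [hfac]; field_simp
      ring
    · intro τ hτ
      have hτ' := hsub hτ
      calc ‖A ζ τ i 0 * Pic A T n ζ τ 0 j + A ζ τ i 1 * Pic A T n ζ τ 1 j‖
          ≤ ‖A ζ τ i 0‖ * ‖Pic A T n ζ τ 0 j‖ + ‖A ζ τ i 1‖ * ‖Pic A T n ζ τ 1 j‖ := by
            refine le_trans (norm_add_le _ _) ?_
            rw [norm_mul, norm_mul]
        _ ≤ M * ((2*M)^n * (T-τ)^n / n.factorial) + M * ((2*M)^n * (T-τ)^n / n.factorial) :=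
            add_le_add
              (mul_le_mul (hM ζ hζ τ hτ' i 0) (ih ζ hζ τ hτ' 0 j) (norm_nonneg _) hM0)
              (mul_le_mul (hM ζ hζ τ hτ' i 1) (ih ζ hζ τ hτ' 1 j) (norm_nonneg _) hM0)
        _ = 2*M*((2*M)^n / n.factorial) * (T - τ)^n := by ring

theorem u_summable (M : ℝ) : Summable (fun n : ℕ => (2*M)^n * T^n / n.factorial) := by
  have := Real.summable_pow_div_factorial (2*M*T)
  refine this.congr fun n => ?_
  rw [mul_pow]

theorem Pic_bound' (hA : ∀ i j, Continuous fun p : ℂ × ℝ => A p.1 p.2 i j) (hT : 0 ≤ T)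
    {R M : ℝ} (hM0 : 0 ≤ M)
    (hM : ∀ ζ ∈ closedBall (0:ℂ) R, ∀ τ ∈ Icc (0:ℝ) T, ∀ i j, ‖A ζ τ i j‖ ≤ M) (n : ℕ)
    {ζ : ℂ} (hζ : ζ ∈ closedBall (0:ℂ) R) {t : ℝ} (ht : t ∈ Icc (0:ℝ) T) (i j : Fin 2) :
    ‖Pic A T n ζ t i j‖ ≤ (2*M)^n * T^n / n.factorial := by
  refine le_trans (Pic_bound hT hM0 hM n ζ hζ t ht i j) ?_
  have h1 : 0 ≤ T - t := sub_nonneg.2 ht.2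
  have h2 : T - t ≤ T := by linarith [ht.1]
  gcongr

theorem Pic_summable (hA : ∀ i j, Continuous fun p : ℂ × ℝ => A p.1 p.2 i j) (hT : 0 ≤ T)
    (ζ : ℂ) {t : ℝ} (ht : t ∈ Icc (0:ℝ) T) (i j : Fin 2) :
    Summable fun n => Pic A T n ζ t i j := by
  obtain ⟨M, hM0, hM⟩ := exists_M hA hT ‖ζ‖
  have hζB : ζ ∈ closedBall (0:ℂ) ‖ζ‖ := mem_closedBall_zero_iff.2 le_rfl
  exact Summable.of_norm_bounded (u_summable M)
    (fun n => Pic_bound' hA hT hM0 hM n hζB ht i j)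

theorem HS_contOn (hA : ∀ i j, Continuous fun p : ℂ × ℝ => A p.1 p.2 i j) (hT : 0 ≤ T)
    (ζ : ℂ) (i j : Fin 2) : ContinuousOn (fun t => HSf A T ζ t i j) (Icc 0 T) := by
  obtain ⟨M, hM0, hM⟩ := exists_M hA hT ‖ζ‖
  have hζB : ζ ∈ closedBall (0:ℂ) ‖ζ‖ := mem_closedBall_zero_iff.2 le_rfl
  exact continuousOn_tsum
    (fun n => ((Pic_cont hA n i j).comp (Continuous.prodMk_right ζ)).continuousOn)
    (u_summable M) (fun n t ht => Pic_bound' hA hT hM0 hM n hζB ht i j)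
end Abstract

section Abstract2
variable {A : ℂ → ℝ → Fin 2 → Fin 2 → ℂ} {T : ℝ}

theorem HS_eq (hA : ∀ i j, Continuous fun p : ℂ × ℝ => A p.1 p.2 i j) (hT : 0 ≤ T)
    (ζ : ℂ) {t : ℝ} (ht : t ∈ Icc (0:ℝ) T) (i j : Fin 2) :
    HSf A T ζ t i j = (if i = j then 1 else 0)
      - ∫ τ in t..T, (A ζ τ i 0 * HSf A T ζ τ 0 j + A ζ τ i 1 * HSf A T ζ τ 1 j) := by
  obtain ⟨M, hM0, hM⟩ := exists_M hA hT ‖ζ‖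
  have hζB : ζ ∈ closedBall (0:ℂ) ‖ζ‖ := mem_closedBall_zero_iff.2 le_rfl
  set f : ℕ → ℝ → ℂ := fun n τ =>
    A ζ τ i 0 * Pic A T n ζ τ 0 j + A ζ τ i 1 * Pic A T n ζ τ 1 j with hf
  have hfc : ∀ n, Continuous (f n) := fun n =>
    (((hA i 0).comp (Continuous.prodMk_right ζ)).mul
      ((Pic_cont hA n 0 j).comp (Continuous.prodMk_right ζ))).add
    (((hA i 1).comp (Continuous.prodMk_right ζ)).mul
      ((Pic_cont hA n 1 j).comp (Continuous.prodMk_right ζ)))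
  have hIoc : Ioc t T ⊆ Icc 0 T := fun x hx => ⟨le_trans ht.1 hx.1.le, hx.2⟩
  have hbb : ∀ n, ∀ τ ∈ Ioc t T, ‖f n τ‖ ≤ 2*M*((2*M)^n*T^n/n.factorial) := by
    intro n τ hτ
    have hτ' := hIoc hτ
    calc ‖f n τ‖ ≤ ‖A ζ τ i 0‖ * ‖Pic A T n ζ τ 0 j‖ + ‖A ζ τ i 1‖ * ‖Pic A T n ζ τ 1 j‖ := by
          refine le_trans (norm_add_le _ _) ?_
          rw [norm_mul, norm_mul]
      _ ≤ M * ((2*M)^n * T^n / n.factorial) + M * ((2*M)^n * T^n / n.factorial) :=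
          add_le_add
            (mul_le_mul (hM ζ hζB τ hτ' i 0) (Pic_bound' hA hT hM0 hM n hζB hτ' 0 j)
              (norm_nonneg _) hM0)
            (mul_le_mul (hM ζ hζB τ hτ' i 1) (Pic_bound' hA hT hM0 hM n hζB hτ' 1 j)
              (norm_nonneg _) hM0)
      _ = 2*M*((2*M)^n*T^n/n.factorial) := by ring
  have hint : (∫ τ in t..T, (A ζ τ i 0 * HSf A T ζ τ 0 j + A ζ τ i 1 * HSf A T ζ τ 1 j))
      = ∑' n, ∫ τ in t..T, f n τ := by
    rw [intervalIntegral.integral_of_le ht.2]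
    rw [setIntegral_congr_fun measurableSet_Ioc (g := fun τ => ∑' n, f n τ) ?_]
    · rw [MeasureTheory.integral_tsum (fun n => (hfc n).aestronglyMeasurable.restrict) ?_]
      · exact tsum_congr fun n => (intervalIntegral.integral_of_le ht.2).symm
      · have hb : ∀ n : ℕ, ∫⁻ τ, ‖f n τ‖₊ ∂(volume.restrict (Ioc t T))
            ≤ ENNReal.ofReal (2*M*((2*M)^n*T^n/n.factorial)) * ENNReal.ofReal (T - t) := by
          intro n
          have : ∫⁻ τ, ‖f n τ‖₊ ∂(volume.restrict (Ioc t T))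
              ≤ ∫⁻ _, ENNReal.ofReal (2*M*((2*M)^n*T^n/n.factorial))
                  ∂(volume.restrict (Ioc t T)) := by
            apply lintegral_mono_ae
            filter_upwards [ae_restrict_mem measurableSet_Ioc] with τ hτ
            rw [← enorm_eq_nnnorm, ← ofReal_norm]
            exact ENNReal.ofReal_le_ofReal (hbb n τ hτ)
          refine le_trans this (le_of_eq ?_)
          rw [lintegral_const, Measure.restrict_apply_univ, Real.volume_Ioc]
        refine ne_top_of_le_ne_top ?_ (ENNReal.tsum_le_tsum hb)
        rw [ENNReal.tsum_mul_right, ← ENNReal.ofReal_tsum_of_nonneg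
          (fun n => by positivity) (((u_summable (T := T) M)).mul_left (2*M))]
        exact ENNReal.mul_ne_top ENNReal.ofReal_ne_top ENNReal.ofReal_ne_top
    · intro τ hτ
      have hτ' := hIoc hτ
      simp only [HSf]
      rw [← tsum_mul_left, ← tsum_mul_left,
        Summable.tsum_add ((Pic_summable hA hT ζ hτ' 0 j).mul_left _)
          ((Pic_summable hA hT ζ hτ' 1 j).mul_left _)]
  have hs : (∑' n, ∫ τ in t..T, f n τ) = ∑' n, -(Pic A T (n+1) ζ t i j) :=
    tsum_congr fun n => by rw [show Pic A T (n+1) ζ t i j = -∫ τ in t..T, f n τ from rfl, neg_neg]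
  rw [hint, hs, tsum_neg]
  have h0 := Summable.tsum_eq_zero_add (Pic_summable hA hT ζ ht i j)
  simp only [HSf] at *
  rw [h0]
  simp only [Pic]
  ring

theorem HS_T (ζ : ℂ) (i j : Fin 2) : HSf A T ζ T i j = if i = j then 1 else 0 := by
  rw [HSf, tsum_eq_single 0]
  · rfl
  · intro n hn
    obtain ⟨m, rfl⟩ := Nat.exists_eq_succ_of_ne_zero hn
    simp only [Pic, intervalIntegral.integral_same, neg_zero]

theorem HS_hasDeriv (hA : ∀ i j, Continuous fun p : ℂ × ℝ => A p.1 p.2 i j) (hT : 0 ≤ T)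
    (ζ : ℂ) {t : ℝ} (ht : t ∈ Icc (0:ℝ) T) (i j : Fin 2) :
    HasDerivWithinAt (fun s => HSf A T ζ s i j)
      (A ζ t i 0 * HSf A T ζ t 0 j + A ζ t i 1 * HSf A T ζ t 1 j) (Icc 0 T) t := by
  haveI : Fact (t ∈ Icc (0:ℝ) T) := ⟨ht⟩
  set g : ℝ → ℂ := fun τ => A ζ τ i 0 * HSf A T ζ τ 0 j + A ζ τ i 1 * HSf A T ζ τ 1 j with hg
  have hgc : ContinuousOn g (Icc 0 T) :=
    ((((hA i 0).comp (Continuous.prodMk_right ζ)).continuousOn).mul (HS_contOn hA hT ζ 0 j)).add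
      ((((hA i 1).comp (Continuous.prodMk_right ζ)).continuousOn).mul (HS_contOn hA hT ζ 1 j))
  have hgint : IntervalIntegrable g volume T t := by
    apply ContinuousOn.intervalIntegrable (hgc.mono ?_)
    rw [uIcc_comm, uIcc_of_le ht.2]
    exact Icc_subset_Icc ht.1 le_rfl
  have hmeas : StronglyMeasurableAtFilter g (𝓝[Icc (0:ℝ) T] t) volume :=
    hgc.stronglyMeasurableAtFilter_nhdsWithin measurableSet_Icc t
  have hFTC := intervalIntegral.integral_hasDerivWithinAt_right (a := T)
    (s := Icc (0:ℝ) T) (t := Icc (0:ℝ) T) hgint hmeas (hgc t ht)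
  have hconst := hFTC.const_add (if i = j then (1:ℂ) else 0)
  refine HasDerivWithinAt.congr hconst ?_ ?_
  · intro s hs
    rw [HS_eq hA hT ζ hs i j, intervalIntegral.integral_symm, sub_neg_eq_add]
  · rw [HS_eq hA hT ζ ht i j, intervalIntegral.integral_symm, sub_neg_eq_add]

theorem HS_det (hA : ∀ i j, Continuous fun p : ℂ × ℝ => A p.1 p.2 i j)
    (hA3 : ∀ ζ τ, A ζ τ 1 1 = - A ζ τ 0 0) (hT : 0 ≤ T)
    (ζ : ℂ) {t : ℝ} (ht : t ∈ Icc (0:ℝ) T) :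
    HSf A T ζ t 0 0 * HSf A T ζ t 1 1 - HSf A T ζ t 0 1 * HSf A T ζ t 1 0 = 1 := by
  set d : ℝ → ℂ := fun s =>
    HSf A T ζ s 0 0 * HSf A T ζ s 1 1 - HSf A T ζ s 0 1 * HSf A T ζ s 1 0 with hd
  have hder : ∀ s ∈ Icc (0:ℝ) T, HasDerivWithinAt d 0 (Icc 0 T) s := by
    intro s hs
    have H00 := HS_hasDeriv hA hT ζ hs 0 0
    have H11 := HS_hasDeriv hA hT ζ hs 1 1
    have H01 := HS_hasDeriv hA hT ζ hs 0 1
    have H10 := HS_hasDeriv hA hT ζ hs 1 0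
    have hcomb := (H00.mul H11).sub (H01.mul H10)
    have hzero : (A ζ s 0 0 * HSf A T ζ s 0 0 + A ζ s 0 1 * HSf A T ζ s 1 0) * HSf A T ζ s 1 1
        + HSf A T ζ s 0 0 * (A ζ s 1 0 * HSf A T ζ s 0 1 + A ζ s 1 1 * HSf A T ζ s 1 1)
        - ((A ζ s 0 0 * HSf A T ζ s 0 1 + A ζ s 0 1 * HSf A T ζ s 1 1) * HSf A T ζ s 1 0
        + HSf A T ζ s 0 1 * (A ζ s 1 0 * HSf A T ζ s 0 0 + A ζ s 1 1 * HSf A T ζ s 1 0)) = 0 := by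
      rw [hA3]; ring
    rw [hzero] at hcomb
    exact hcomb
  have hzero' : ContinuousLinearMap.toSpanSingleton ℝ (0:ℂ) = 0 := by
    ext x; simp
  have hconst : ∀ s ∈ Icc (0:ℝ) T, d s = d T := by
    intro s hs
    have hb := (convex_Icc (0:ℝ) T).norm_image_sub_le_of_norm_hasFDerivWithin_le
      (f := d) (f' := fun _ => (0 : ℝ →L[ℝ] ℂ)) (C := 0)
      (fun x hx => by
        have := (hder x hx).hasFDerivWithinAt
        rwa [hzero'] at this)
      (fun x _ => by simp) (right_mem_Icc.2 hT) hs
    simp only [zero_mul] at hb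
    have := norm_le_zero_iff.1 hb
    exact sub_eq_zero.1 this
  have hTval : d T = 1 := by
    simp only [hd, HS_T]
    norm_num
  rw [show HSf A T ζ t 0 0 * HSf A T ζ t 1 1 - HSf A T ζ t 0 1 * HSf A T ζ t 1 0 = d t from rfl,
    hconst t ht, hTval]

theorem HS_unique (hA : ∀ i j, Continuous fun p : ℂ × ℝ => A p.1 p.2 i j) (hT : 0 ≤ T)
    (ζ : ℂ) (Q : ℝ → Fin 2 → Fin 2 → ℂ)
    (hQc : ∀ i j, ContinuousOn (fun t => Q t i j) (Icc 0 T))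
    (hQe : ∀ t ∈ Icc (0:ℝ) T, ∀ i j, Q t i j = (if i = j then 1 else 0)
      - ∫ τ in t..T, (A ζ τ i 0 * Q τ 0 j + A ζ τ i 1 * Q τ 1 j)) :
    ∀ t ∈ Icc (0:ℝ) T, ∀ i j, Q t i j = HSf A T ζ t i j := by
  obtain ⟨M, hM0, hM⟩ := exists_M hA hT ‖ζ‖
  have hζB : ζ ∈ closedBall (0:ℂ) ‖ζ‖ := mem_closedBall_zero_iff.2 le_rfl
  set D : ℝ → Fin 2 → Fin 2 → ℂ := fun t i j => Q t i j - HSf A T ζ t i j with hD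
  have hDc : ∀ i j, ContinuousOn (fun t => D t i j) (Icc 0 T) := fun i j =>
    (hQc i j).sub (HS_contOn hA hT ζ i j)
  obtain ⟨C, hC⟩ : ∃ C, ∀ t ∈ Icc (0:ℝ) T, ∀ i j, ‖D t i j‖ ≤ C := by
    obtain ⟨C, hC⟩ := (isCompact_Icc (a := (0:ℝ)) (b := T)).exists_bound_of_continuousOn
      (f := fun t => (D t 0 0, D t 0 1, D t 1 0, D t 1 1))
      ((hDc 0 0).prodMk ((hDc 0 1).prodMk ((hDc 1 0).prodMk (hDc 1 1))))
    refine ⟨C, fun t ht i j => ?_⟩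
    have h := hC t ht
    set p := (D t 0 0, D t 0 1, D t 1 0, D t 1 1) with hp
    have e00 : ‖D t 0 0‖ ≤ ‖p‖ := norm_fst_le p
    have e01 : ‖D t 0 1‖ ≤ ‖p‖ := le_trans (norm_fst_le p.2) (norm_snd_le p)
    have e10 : ‖D t 1 0‖ ≤ ‖p‖ :=
      le_trans (le_trans (norm_fst_le p.2.2) (norm_snd_le p.2)) (norm_snd_le p)
    have e11 : ‖D t 1 1‖ ≤ ‖p‖ :=
      le_trans (le_trans (norm_snd_le p.2.2) (norm_snd_le p.2)) (norm_snd_le p)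
    fin_cases i <;> fin_cases j <;>
      first
        | exact le_trans e00 h | exact le_trans e01 h
        | exact le_trans e10 h | exact le_trans e11 h
  have hC0 : 0 ≤ C := le_trans (norm_nonneg _) (hC 0 (left_mem_Icc.2 hT) 0 0)
  have hDeq : ∀ t ∈ Icc (0:ℝ) T, ∀ i j, D t i j
      = -∫ τ in t..T, (A ζ τ i 0 * D τ 0 j + A ζ τ i 1 * D τ 1 j) := by
    intro t ht i j
    have hsub : uIcc t T ⊆ Icc 0 T := by
      rw [uIcc_of_le ht.2]
      exact Icc_subset_Icc ht.1 le_rfl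
    have hAc : ∀ (k : Fin 2), ContinuousOn (fun τ => A ζ τ i k) (uIcc t T) := fun k =>
      (((hA i k).comp (Continuous.prodMk_right ζ)).continuousOn).mono hsub
    have hintQ : IntervalIntegrable
        (fun τ => A ζ τ i 0 * Q τ 0 j + A ζ τ i 1 * Q τ 1 j) volume t T :=
      (((hAc 0).mul ((hQc 0 j).mono hsub)).add
        ((hAc 1).mul ((hQc 1 j).mono hsub))).intervalIntegrable
    have hintH : IntervalIntegrable
        (fun τ => A ζ τ i 0 * HSf A T ζ τ 0 j + A ζ τ i 1 * HSf A T ζ τ 1 j) volume t T :=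
      (((hAc 0).mul ((HS_contOn hA hT ζ 0 j).mono hsub)).add
        ((hAc 1).mul ((HS_contOn hA hT ζ 1 j).mono hsub))).intervalIntegrable
    have key : D t i j = -(∫ τ in t..T,
        ((A ζ τ i 0 * Q τ 0 j + A ζ τ i 1 * Q τ 1 j)
          - (A ζ τ i 0 * HSf A T ζ τ 0 j + A ζ τ i 1 * HSf A T ζ τ 1 j))) := by
      rw [intervalIntegral.integral_sub hintQ hintH]
      simp only [hD]
      rw [hQe t ht i j, HS_eq hA hT ζ ht i j]
      ring
    rw [key]
    congr 1
    apply intervalIntegral.integral_congr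
    intro τ _
    simp only [hD]
    ring
  have hbnd : ∀ n, ∀ t ∈ Icc (0:ℝ) T, ∀ i j,
      ‖D t i j‖ ≤ C * ((2*M)^n * (T-t)^n / n.factorial) := by
    intro n
    induction n with
    | zero =>
      intro t ht i j
      simpa using hC t ht i j
    | succ n ih =>
      intro t ht i j
      have hIoc : Ι t T ⊆ Icc 0 T := by
        rw [uIoc_of_le ht.2]
        exact fun x hx => ⟨le_trans ht.1 hx.1.le, hx.2⟩
      rw [hDeq t ht i j, norm_neg]
      have hstep := volterra_step (T := T) ht
        (K := 2*M*(C * ((2*M)^n / n.factorial))) (by positivity) n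
        (f := fun τ => A ζ τ i 0 * D τ 0 j + A ζ τ i 1 * D τ 1 j) ?_
      · refine le_trans hstep (le_of_eq ?_)
        have hfac : ((n+1).factorial : ℝ) = (n+1) * n.factorial := by
          rw [Nat.factorial_succ]; push_cast; ring
        have h1 : (n.factorial : ℝ) ≠ 0 := Nat.cast_ne_zero.2 n.factorial_ne_zero
        have h2 : ((n:ℝ)+1) ≠ 0 := by positivity
        rw [hfac]; field_simp
        ring
      · intro τ hτ
        have hτ' := hIoc hτ
        have hb0 : ‖D τ 0 j‖ ≤ C * ((2*M)^n * (T-τ)^n / n.factorial) := by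
          have := ih τ hτ' 0 j
          refine le_trans this (le_of_eq ?_); ring
        have hb1 : ‖D τ 1 j‖ ≤ C * ((2*M)^n * (T-τ)^n / n.factorial) := ih τ hτ' 1 j
        calc ‖A ζ τ i 0 * D τ 0 j + A ζ τ i 1 * D τ 1 j‖
            ≤ ‖A ζ τ i 0‖ * ‖D τ 0 j‖ + ‖A ζ τ i 1‖ * ‖D τ 1 j‖ := by
              refine le_trans (norm_add_le _ _) ?_
              rw [norm_mul, norm_mul]
          _ ≤ M * (C * ((2*M)^n * (T-τ)^n / n.factorial))
              + M * (C * ((2*M)^n * (T-τ)^n / n.factorial)) :=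
              add_le_add
                (mul_le_mul (hM ζ hζB τ hτ' i 0) hb0 (norm_nonneg _) hM0)
                (mul_le_mul (hM ζ hζB τ hτ' i 1) hb1 (norm_nonneg _) hM0)
          _ = 2*M*(C * ((2*M)^n / n.factorial)) * (T - τ)^n := by ring
  intro t ht i j
  have hlim : Tendsto (fun n : ℕ => C * ((2*M)^n * T^n / n.factorial)) atTop (𝓝 0) := by
    have := ((u_summable (T := T) M).mul_left C).tendsto_atTop_zero
    simpa using this
  have hle : ‖D t i j‖ ≤ 0 := by
    refine ge_of_tendsto hlim (Eventually.of_forall fun n => ?_)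
    refine le_trans (hbnd n t ht i j) ?_
    have h1 : 0 ≤ T - t := sub_nonneg.2 ht.2
    have h2 : T - t ≤ T := by linarith [ht.1]
    gcongr
  have : D t i j = 0 := by
    have := norm_le_zero_iff.1 hle
    exact this
  exact sub_eq_zero.1 this

theorem HS_diff (hA : ∀ i j, Continuous fun p : ℂ × ℝ => A p.1 p.2 i j)
    (hAd : ∀ τ i j, Differentiable ℂ fun ζ => A ζ τ i j) (hT : 0 ≤ T)
    {t : ℝ} (ht : t ∈ Icc (0:ℝ) T) (i j : Fin 2) :
    Differentiable ℂ fun ζ => HSf A T ζ t i j := by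
  intro ζ₀
  obtain ⟨M, hM0, hM⟩ := exists_M hA hT (‖ζ₀‖ + 1)
  have hU : IsOpen (ball (0:ℂ) (‖ζ₀‖ + 1)) := isOpen_ball
  have hmem : ζ₀ ∈ ball (0:ℂ) (‖ζ₀‖ + 1) := by
    simp only [mem_ball_zero_iff]
    linarith
  have hdiff := Complex.differentiableOn_tsum_of_summable_norm (u_summable (T := T) M)
    (fun n => (Pic_diff hA hAd n t ht.2 i j).differentiableOn)
    hU
    (fun n w hw => Pic_bound' hA hT hM0 hM n (ball_subset_closedBall hw) ht i j)
  exact (hdiff.differentiableAt (hU.mem_nhds hmem))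

end Abstract2

noncomputable def θc (γ : ℝ) (ζ : ℂ) : ℂ := 8 * (γ : ℂ) * ζ ^ 4 - 2 * ζ ^ 2

def εf : Fin 2 → ℂ := ![1, -1]

noncomputable def Af (γ : ℝ) (w₀ w₁ w₂ w₃ : ℝ → ℂ) (ζ : ℂ) (τ : ℝ) (i j : Fin 2) : ℂ :=
  Complex.exp (Complex.I * θc γ ζ * (τ:ℂ) * (εf j - εf i)) * Rm γ w₀ w₁ w₂ w₃ τ ζ i j

theorem Km_entry (γ : ℝ) (v₀ v₁ v₂ v₃ w₀ w₁ w₂ w₃ : ℝ → ℂ) (ζ : ℂ)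
    (X : ℝ → Fin 2 → Fin 2 → ℂ) (t τ : ℝ)
    (hR : Rm γ v₀ v₁ v₂ v₃ τ ζ = Rm γ w₀ w₁ w₂ w₃ τ ζ) (i j : Fin 2) :
    Km γ v₀ v₁ v₂ v₃ ζ (fun s => Matrix.of fun a b =>
        Complex.exp (Complex.I * θc γ ζ * (s:ℂ) * (εf a - εf b)) * X s a b) t τ i j
    = Complex.exp (Complex.I * θc γ ζ * (t:ℂ) * (εf i - εf j)) *
      (Af γ w₀ w₁ w₂ w₃ ζ τ i 0 * X τ 0 j + Af γ w₀ w₁ w₂ w₃ ζ τ i 1 * X τ 1 j) := by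
  have hcast : ((t - τ : ℝ) : ℂ) = (t:ℂ) - (τ:ℂ) := by push_cast; ring
  simp only [Km, hR, Af]
  set θ := θc γ ζ with hθ
  have h1 : (8 * (γ:ℂ) * ζ ^ 4 - 2 * ζ ^ 2) = θ := rfl
  set R := Rm γ w₀ w₁ w₂ w₃ τ ζ with hRd
  have h2 : Complex.exp (Complex.I*θ*((t:ℂ) - (τ:ℂ)))
      = Complex.exp (Complex.I*θ*(t:ℂ)) * (Complex.exp (Complex.I*θ*(τ:ℂ)))⁻¹ := by
    rw [← Complex.exp_neg, ← Complex.exp_add]; congr 1; ring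
  have h3 : Complex.exp (Complex.I*θ*(τ:ℂ)*2) = (Complex.exp (Complex.I*θ*(τ:ℂ)))^2 := by
    rw [sq, ← Complex.exp_add]; congr 1; ring
  have h4 : Complex.exp (Complex.I*θ*(t:ℂ)*2) = (Complex.exp (Complex.I*θ*(t:ℂ)))^2 := by
    rw [sq, ← Complex.exp_add]; congr 1; ring
  fin_cases i <;> fin_cases j <;>
    simp only [h1, hcast, Matrix.mul_apply, Fin.sum_univ_two, Matrix.cons_val', Matrix.cons_val_zero,
      Matrix.cons_val_one, Matrix.head_cons, Matrix.head_fin_const, Matrix.empty_val',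
      Matrix.cons_val_fin_one, Matrix.of_apply, εf] <;>
    norm_num <;>
    (simp only [Complex.exp_neg, h2, h3, h4]; field_simp)


theorem Rm_cont (γ : ℝ) (w₀ w₁ w₂ w₃ : ℝ → ℂ) (h0 : Continuous w₀) (h1 : Continuous w₁)
    (h2 : Continuous w₂) (h3 : Continuous w₃) (i j : Fin 2) :
    Continuous fun p : ℂ × ℝ => Rm γ w₀ w₁ w₂ w₃ p.2 p.1 i j := by
  have hstar : ∀ z : ℂ, (starRingEnd ℂ) z = star z := fun _ => rfl
  fin_cases i <;> fin_cases j <;>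
    simp only [Rm, ← Complex.mul_conj, hstar, Fin.zero_eta, Fin.mk_one, Fin.isValue,
      Matrix.cons_val', Matrix.cons_val_zero, Matrix.cons_val_one,
      Matrix.head_cons, Matrix.head_fin_const, Matrix.empty_val', Matrix.cons_val_fin_one,
      Matrix.of_apply] <;>
    fun_prop

theorem Rm_diff (γ : ℝ) (w₀ w₁ w₂ w₃ : ℝ → ℂ) (τ : ℝ) (i j : Fin 2) :
    Differentiable ℂ fun ζ : ℂ => Rm γ w₀ w₁ w₂ w₃ τ ζ i j := by
  have hstar : ∀ z : ℂ, (starRingEnd ℂ) z = star z := fun _ => rfl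
  fin_cases i <;> fin_cases j <;>
    simp only [Rm, hstar, Fin.zero_eta, Fin.mk_one, Fin.isValue,
      Matrix.cons_val', Matrix.cons_val_zero, Matrix.cons_val_one,
      Matrix.head_cons, Matrix.head_fin_const, Matrix.empty_val', Matrix.cons_val_fin_one,
      Matrix.of_apply] <;>
    fun_prop

theorem Af_cont (γ : ℝ) (w₀ w₁ w₂ w₃ : ℝ → ℂ) (h0 : Continuous w₀) (h1 : Continuous w₁)
    (h2 : Continuous w₂) (h3 : Continuous w₃) (i j : Fin 2) :
    Continuous fun p : ℂ × ℝ => Af γ w₀ w₁ w₂ w₃ p.1 p.2 i j := by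
  apply Continuous.mul ?_ (Rm_cont γ w₀ w₁ w₂ w₃ h0 h1 h2 h3 i j)
  apply Complex.continuous_exp.comp
  simp only [θc]
  fun_prop

theorem Af_diff (γ : ℝ) (w₀ w₁ w₂ w₃ : ℝ → ℂ) (τ : ℝ) (i j : Fin 2) :
    Differentiable ℂ fun ζ : ℂ => Af γ w₀ w₁ w₂ w₃ ζ τ i j := by
  apply Differentiable.mul ?_ (Rm_diff γ w₀ w₁ w₂ w₃ τ i j)
  apply Complex.differentiable_exp.comp
  simp only [θc]
  fun_prop

theorem Af_trace (γ : ℝ) (w₀ w₁ w₂ w₃ : ℝ → ℂ) (ζ : ℂ) (τ : ℝ) :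
    Af γ w₀ w₁ w₂ w₃ ζ τ 1 1 = - Af γ w₀ w₁ w₂ w₃ ζ τ 0 0 := by
  simp only [Af, Rm, εf, Matrix.cons_val', Matrix.cons_val_zero, Matrix.cons_val_one,
    Matrix.head_cons, Matrix.head_fin_const, Matrix.empty_val', Matrix.cons_val_fin_one,
    Matrix.of_apply]
  ring_nf

set_option maxHeartbeats 1600000 in
/-- for continuous boundary data `v₀, v₁, v₂, v₃` on `[0,T]` and every
`ζ ∈ ℂ`, the Volterra equation for the t-part eigenfunction has a unique continuous solution
`G(·,ζ)` on `[0,T]`; `det G(t,ζ) = 1` on `[0,T]`; every entry of `G(t,ζ)` is entire in `ζ`;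
in particular the spectral functions `Y(ζ) = G₂₂(0,ζ)` and `Z(ζ) = G₁₂(0,ζ)` are entire. -/
theorem stmt_19 (γ : ℝ) (T : ℝ) (hT : 0 < T) (v₀ v₁ v₂ v₃ : ℝ → ℂ)
    (h₀ : ContinuousOn v₀ (Set.Icc 0 T)) (h₁ : ContinuousOn v₁ (Set.Icc 0 T))
    (h₂ : ContinuousOn v₂ (Set.Icc 0 T)) (h₃ : ContinuousOn v₃ (Set.Icc 0 T)) :
    ∃ G : ℂ → ℝ → Matrix (Fin 2) (Fin 2) ℂ,
      (∀ ζ : ℂ, IsVolterraSolT γ T v₀ v₁ v₂ v₃ ζ (G ζ)) ∧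
      (∀ (ζ : ℂ) (H : ℝ → Matrix (Fin 2) (Fin 2) ℂ), IsVolterraSolT γ T v₀ v₁ v₂ v₃ ζ H →
        ∀ t ∈ Set.Icc (0 : ℝ) T, H t = G ζ t) ∧
      (∀ ζ : ℂ, ∀ t ∈ Set.Icc (0 : ℝ) T, (G ζ t).det = 1) ∧
      (∀ t ∈ Set.Icc (0 : ℝ) T, ∀ i j : Fin 2, Differentiable ℂ fun ζ => G ζ t i j) ∧
      (Differentiable ℂ fun ζ => G ζ 0 1 1) ∧ (Differentiable ℂ fun ζ => G ζ 0 0 1) := by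


  -- extend the boundary data continuously to all of ℝ
  have hT0 : (0:ℝ) ≤ T := hT.le
  set pr : ℝ → ℝ := fun t => min (max t 0) T with hpr
  have hprc : Continuous pr := (continuous_id.max continuous_const).min continuous_const
  have hprm : ∀ t, pr t ∈ Icc (0:ℝ) T := fun t =>
    ⟨le_min (le_max_right _ _) hT0, min_le_right _ _⟩
  have hpr_id : ∀ t ∈ Icc (0:ℝ) T, pr t = t := fun t ht => by
    simp only [hpr]; rw [max_eq_left ht.1, min_eq_left ht.2]
  set w₀ : ℝ → ℂ := v₀ ∘ pr with hw₀d
  set w₁ : ℝ → ℂ := v₁ ∘ pr with hw₁d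
  set w₂ : ℝ → ℂ := v₂ ∘ pr with hw₂d
  set w₃ : ℝ → ℂ := v₃ ∘ pr with hw₃d
  have hw0c : Continuous w₀ := h₀.comp_continuous hprc hprm
  have hw1c : Continuous w₁ := h₁.comp_continuous hprc hprm
  have hw2c : Continuous w₂ := h₂.comp_continuous hprc hprm
  have hw3c : Continuous w₃ := h₃.comp_continuous hprc hprm
  have hw0e : ∀ t ∈ Icc (0:ℝ) T, v₀ t = w₀ t := fun t ht => by
    simp only [hw₀d, Function.comp_apply, hpr_id t ht]
  have hw1e : ∀ t ∈ Icc (0:ℝ) T, v₁ t = w₁ t := fun t ht => by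
    simp only [hw₁d, Function.comp_apply, hpr_id t ht]
  have hw2e : ∀ t ∈ Icc (0:ℝ) T, v₂ t = w₂ t := fun t ht => by
    simp only [hw₂d, Function.comp_apply, hpr_id t ht]
  have hw3e : ∀ t ∈ Icc (0:ℝ) T, v₃ t = w₃ t := fun t ht => by
    simp only [hw₃d, Function.comp_apply, hpr_id t ht]
  set A : ℂ → ℝ → Fin 2 → Fin 2 → ℂ := Af γ w₀ w₁ w₂ w₃ with hA
  have hA1 : ∀ i j, Continuous fun p : ℂ × ℝ => A p.1 p.2 i j :=
    Af_cont γ w₀ w₁ w₂ w₃ hw0c hw1c hw2c hw3c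
  have hA2 : ∀ τ i j, Differentiable ℂ fun ζ => A ζ τ i j := fun τ =>
    Af_diff γ w₀ w₁ w₂ w₃ τ
  have hA3 : ∀ ζ τ, A ζ τ 1 1 = - A ζ τ 0 0 := fun ζ τ => Af_trace γ w₀ w₁ w₂ w₃ ζ τ
  have hRmeq : ∀ (ζ:ℂ), ∀ τ ∈ Icc (0:ℝ) T,
      Rm γ v₀ v₁ v₂ v₃ τ ζ = Rm γ w₀ w₁ w₂ w₃ τ ζ := by
    intro ζ τ hτ
    simp only [Rm, hw0e τ hτ, hw1e τ hτ, hw2e τ hτ, hw3e τ hτ]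
  have hexpc : ∀ (ζ : ℂ) (c : ℂ), Continuous fun t : ℝ =>
      Complex.exp (Complex.I * θc γ ζ * (t:ℂ) * c) := by
    intro ζ c
    apply Complex.continuous_exp.comp
    fun_prop
  have hexpd : ∀ (t : ℝ) (i j : Fin 2), Differentiable ℂ fun ζ : ℂ =>
      Complex.exp (Complex.I * θc γ ζ * (t:ℂ) * (εf i - εf j)) := by
    intro t i j
    apply Complex.differentiable_exp.comp
    simp only [θc]
    fun_prop
  refine ⟨fun ζ t => Matrix.of fun i j =>
      Complex.exp (Complex.I * θc γ ζ * (t:ℂ) * (εf i - εf j)) * HSf A T ζ t i j,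
    ?_, ?_, ?_, ?_, ?_, ?_⟩
  · -- solution property
    intro ζ
    constructor
    · intro i j
      exact ((hexpc ζ _).continuousOn).mul (HS_contOn hA1 hT0 ζ i j)
    · intro t ht i j
      have hsub : uIcc t T ⊆ Icc (0:ℝ) T := by
        rw [uIcc_of_le ht.2]
        exact Icc_subset_Icc ht.1 le_rfl
      have hKmB : ∀ τ ∈ uIcc t T, Km γ v₀ v₁ v₂ v₃ ζ (fun s => Matrix.of fun a b =>
            Complex.exp (Complex.I * θc γ ζ * (s:ℂ) * (εf a - εf b)) * HSf A T ζ s a b) t τ i j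
          = Complex.exp (Complex.I * θc γ ζ * (t:ℂ) * (εf i - εf j)) *
            (A ζ τ i 0 * HSf A T ζ τ 0 j + A ζ τ i 1 * HSf A T ζ τ 1 j) := by
        intro τ hτ
        exact Km_entry γ v₀ v₁ v₂ v₃ w₀ w₁ w₂ w₃ ζ (fun s a b => HSf A T ζ s a b) t τ
          (hRmeq ζ τ (hsub hτ)) i j
      have hgc : ContinuousOn (fun τ => Complex.exp (Complex.I * θc γ ζ * (t:ℂ) * (εf i - εf j)) *
          (A ζ τ i 0 * HSf A T ζ τ 0 j + A ζ τ i 1 * HSf A T ζ τ 1 j)) (uIcc t T) := by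
        apply ContinuousOn.mul continuousOn_const
        exact ((((hA1 i 0).comp (Continuous.prodMk_right ζ)).continuousOn.mono hsub).mul
            ((HS_contOn hA1 hT0 ζ 0 j).mono hsub)).add
          ((((hA1 i 1).comp (Continuous.prodMk_right ζ)).continuousOn.mono hsub).mul
            ((HS_contOn hA1 hT0 ζ 1 j).mono hsub))
      have hKmCont : ContinuousOn (fun τ => Km γ v₀ v₁ v₂ v₃ ζ (fun s => Matrix.of fun a b =>
          Complex.exp (Complex.I * θc γ ζ * (s:ℂ) * (εf a - εf b)) * HSf A T ζ s a b) t τ i j)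
          (uIcc t T) := hgc.congr hKmB
      refine ⟨hKmCont.intervalIntegrable, ?_⟩
      have hval : (∫ τ in t..T, Km γ v₀ v₁ v₂ v₃ ζ (fun s => Matrix.of fun a b =>
            Complex.exp (Complex.I * θc γ ζ * (s:ℂ) * (εf a - εf b)) * HSf A T ζ s a b) t τ i j)
          = Complex.exp (Complex.I * θc γ ζ * (t:ℂ) * (εf i - εf j)) *
            ∫ τ in t..T, (A ζ τ i 0 * HSf A T ζ τ 0 j + A ζ τ i 1 * HSf A T ζ τ 1 j) := by
        rw [intervalIntegral.integral_congr hKmB]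
        exact intervalIntegral.integral_const_mul _ _
      rw [hval]
      show Complex.exp (Complex.I * θc γ ζ * (t:ℂ) * (εf i - εf j)) * HSf A T ζ t i j = _
      rw [HS_eq hA1 hT0 ζ ht i j, mul_sub]
      congr 1
      rw [Matrix.one_apply]
      by_cases h : i = j
      · simp [h, sub_self, mul_zero, Complex.exp_zero]
      · simp [h]
  · -- uniqueness
    intro ζ H hH t ht
    obtain ⟨hHc, hHe⟩ := hH
    set Q : ℝ → Fin 2 → Fin 2 → ℂ := fun s a b =>
      Complex.exp (-(Complex.I * θc γ ζ * (s:ℂ) * (εf a - εf b))) * H s a b with hQ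
    have hHG : H = fun s : ℝ => Matrix.of fun a b =>
        Complex.exp (Complex.I * θc γ ζ * (s:ℂ) * (εf a - εf b)) * Q s a b := by
      funext s
      ext a b
      simp only [hQ, Matrix.of_apply, ← mul_assoc, ← Complex.exp_add]
      rw [add_neg_cancel, Complex.exp_zero, one_mul]
    have hQc : ∀ a b, ContinuousOn (fun s => Q s a b) (Icc 0 T) := by
      intro a b
      refine ContinuousOn.mul (Continuous.continuousOn ?_) (hHc a b)
      exact Complex.continuous_exp.comp (by fun_prop)
    have hQe : ∀ s ∈ Icc (0:ℝ) T, ∀ i j, Q s i j = (if i = j then 1 else 0)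
        - ∫ τ in s..T, (A ζ τ i 0 * Q τ 0 j + A ζ τ i 1 * Q τ 1 j) := by
      intro s hs i j
      have hsub : uIcc s T ⊆ Icc (0:ℝ) T := by
        rw [uIcc_of_le hs.2]
        exact Icc_subset_Icc hs.1 le_rfl
      have h1 := (hHe s hs i j).2
      have hKmB : ∀ τ ∈ uIcc s T, Km γ v₀ v₁ v₂ v₃ ζ H s τ i j
          = Complex.exp (Complex.I * θc γ ζ * (s:ℂ) * (εf i - εf j)) *
            (A ζ τ i 0 * Q τ 0 j + A ζ τ i 1 * Q τ 1 j) := by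
        intro τ hτ
        rw [hHG]
        exact Km_entry γ v₀ v₁ v₂ v₃ w₀ w₁ w₂ w₃ ζ (fun u a b => Q u a b) s τ
          (hRmeq ζ τ (hsub hτ)) i j
      simp only [hQ]
      rw [h1, intervalIntegral.integral_congr hKmB, intervalIntegral.integral_const_mul,
        mul_sub, ← mul_assoc, ← Complex.exp_add, neg_add_cancel, Complex.exp_zero, one_mul,
        Matrix.one_apply]
      congr 1
      by_cases h : i = j
      · simp [h, sub_self, mul_zero, Complex.exp_zero]
      · simp [h]
    have huniq := HS_unique hA1 hT0 ζ Q hQc hQe t ht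
    rw [hHG]
    ext a b
    simp only [Matrix.of_apply]
    rw [huniq a b]
  · -- determinant
    intro ζ t ht
    have hdet := HS_det hA1 hA3 hT0 ζ ht
    rw [Matrix.det_fin_two]
    simp only [Matrix.of_apply]
    have h00 : εf (0 : Fin 2) - εf (0 : Fin 2) = 0 := sub_self _
    have h11 : εf (1 : Fin 2) - εf (1 : Fin 2) = 0 := sub_self _
    have hcancel : Complex.exp (Complex.I * θc γ ζ * (t:ℂ) * (εf (0:Fin 2) - εf 1)) *
        Complex.exp (Complex.I * θc γ ζ * (t:ℂ) * (εf (1:Fin 2) - εf 0)) = 1 := by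
      rw [← Complex.exp_add, ← mul_add]
      have : εf (0:Fin 2) - εf 1 + (εf (1:Fin 2) - εf 0) = 0 := by ring
      rw [this, mul_zero, Complex.exp_zero]
    rw [h00, h11, mul_zero, Complex.exp_zero, one_mul, one_mul]
    calc HSf A T ζ t 0 0 * HSf A T ζ t 1 1 -
          Complex.exp (Complex.I * θc γ ζ * (t:ℂ) * (εf (0:Fin 2) - εf 1)) * HSf A T ζ t 0 1 *
          (Complex.exp (Complex.I * θc γ ζ * (t:ℂ) * (εf (1:Fin 2) - εf 0)) * HSf A T ζ t 1 0)
        = HSf A T ζ t 0 0 * HSf A T ζ t 1 1 -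
          (Complex.exp (Complex.I * θc γ ζ * (t:ℂ) * (εf (0:Fin 2) - εf 1)) *
            Complex.exp (Complex.I * θc γ ζ * (t:ℂ) * (εf (1:Fin 2) - εf 0))) *
          (HSf A T ζ t 0 1 * HSf A T ζ t 1 0) := by ring
      _ = 1 := by rw [hcancel, one_mul]; exact hdet
  · -- differentiability in ζ
    intro t ht i j
    show Differentiable ℂ fun ζ =>
      Complex.exp (Complex.I * θc γ ζ * (t:ℂ) * (εf i - εf j)) * HSf A T ζ t i j
    exact (hexpd t i j).mul (HS_diff hA1 hA2 hT0 ht i j)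
  · -- Y entire
    show Differentiable ℂ fun ζ =>
      Complex.exp (Complex.I * θc γ ζ * ((0:ℝ):ℂ) * (εf 1 - εf 1)) * HSf A T ζ 0 1 1
    exact (hexpd 0 1 1).mul (HS_diff hA1 hA2 hT0 (left_mem_Icc.2 hT0) 1 1)
  · -- Z entire
    show Differentiable ℂ fun ζ =>
      Complex.exp (Complex.I * θc γ ζ * ((0:ℝ):ℂ) * (εf 0 - εf 1)) * HSf A T ζ 0 0 1
    exact (hexpd 0 0 1).mul (HS_diff hA1 hA2 hT0 (left_mem_Icc.2 hT0) 0 1)
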